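/- Let r, m be nonnegative integers with 2r + 2 ≤ m. Let c, c' ∈ RM(m, m−2r−2) be codewords, and let U, V ⊆ 𝔽₂^m be sets such that the degree-r evaluation vectors {u^r : u ∈ U} are linearly independent over 𝔽₂ and likewise {v^r : v ∈ V} are linearly independent over 𝔽₂. If c + 1_U = c' + 1_V in 𝔽₂^{2^m}, where 1_U and 1_V denote the characteristic vectors of U and V, then c = c' and U = V. In particular, any error pattern whose degree-r evaluation vectors are linearly independent is uniquely correctable in RM(m, m−2r−2). -/

import Mathlib

open MvPolynomial

/-- The degree-`r` evaluation vector of a point `u ∈ 𝔽₂^m`. -/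
def evalVec (m r : ℕ) (u : Fin m → ZMod 2) :
    {S : Finset (Fin m) // S.card ≤ r} → ZMod 2 :=
  fun S => ∏ i ∈ S.1, u i

/-- A polynomial is multilinear if every variable occurs with individual degree at most 1. -/
def IsMultilinear {m : ℕ} (f : MvPolynomial (Fin m) (ZMod 2)) : Prop :=
  ∀ d ∈ f.support, ∀ i, d i ≤ 1

/-- The Reed–Muller code `RM(m, r)`: evaluation vectors of multilinear polynomials of
total degree at most `r`. -/
def RM (m r : ℕ) : Set ((Fin m → ZMod 2) → ZMod 2) :=
  { w | ∃ f : MvPolynomial (Fin m) (ZMod 2),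
      IsMultilinear f ∧ f.totalDegree ≤ r ∧ ∀ v, w v = eval v f }

open Classical in
/-- The characteristic vector of a set `U ⊆ 𝔽₂^m`. -/
noncomputable def chi {m : ℕ} (U : Set (Fin m → ZMod 2)) : (Fin m → ZMod 2) → ZMod 2 :=
  fun v => if v ∈ U then 1 else 0

lemma chi_eq_one {m : ℕ} {U : Set (Fin m → ZMod 2)} {v} (h : v ∈ U) : chi U v = 1 := by
  simp [chi, h]

lemma chi_eq_zero {m : ℕ} {U : Set (Fin m → ZMod 2)} {v} (h : v ∉ U) : chi U v = 0 := by
  simp [chi, h]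

/-- Sum of a monomial over all points is zero when some variable is absent. -/
lemma sum_monomial_eq_zero {m : ℕ} (d : Fin m →₀ ℕ) {i : Fin m} (hi : d i = 0) :
    ∑ v : Fin m → ZMod 2, ∏ j, v j ^ d j = 0 := by
  apply Finset.sum_ninvolution (fun v => Function.update v i (v i + 1))
  · intro v
    have hprod : (∏ j, (Function.update v i (v i + 1)) j ^ d j) = ∏ j, v j ^ d j := by
      apply Finset.prod_congr rfl
      intro j _
      by_cases hj : j = i
      · subst hj; simp [hi]
      · simp [Function.update_of_ne hj]
    rw [hprod]
    have : ∀ a : ZMod 2, a + a = 0 := by decide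
    exact this _
  · intro v _
    intro hcontra
    have := congrFun hcontra i
    simp [Function.update_self] at this
  · intro v; exact Finset.mem_univ _
  · intro v
    funext j
    by_cases hj : j = i
    · subst hj
      simp [Function.update_self]
      have : ∀ a : ZMod 2, a + 1 + 1 = a := by decide
      exact this _
    · simp [Function.update_of_ne hj]

/-- Sum of evaluations of a polynomial of total degree < m over all points is zero. -/
lemma sum_eval_eq_zero' {m : ℕ} (p : MvPolynomial (Fin m) (ZMod 2))
    (hp : p.totalDegree < m) : ∑ v : Fin m → ZMod 2, eval v p = 0 := by
  have : ∀ v : Fin m → ZMod 2, eval v p =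
      ∑ d ∈ p.support, p.coeff d * ∏ j, v j ^ d j := fun v => eval_eq' v p
  simp_rw [this]
  rw [Finset.sum_comm]
  apply Finset.sum_eq_zero
  intro d hd
  have hdeg : (∑ j, d j) ≤ p.totalDegree := by
    have h1 := MvPolynomial.le_totalDegree hd
    have h2 : d.sum (fun _ e => e) = ∑ j ∈ d.support, d j := rfl
    have h3 : ∑ j, d j = ∑ j ∈ d.support, d j := by
      apply (Finset.sum_subset (Finset.subset_univ _) ?_).symm
      intro x _ hx
      simpa using hx
    omega
  obtain ⟨i, hi⟩ : ∃ i, d i = 0 := by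
    by_contra hcon
    push_neg at hcon
    have : m ≤ ∑ j, d j := by
      calc m = ∑ _j : Fin m, 1 := by simp
        _ ≤ ∑ j, d j := Finset.sum_le_sum (fun j _ => Nat.one_le_iff_ne_zero.mpr (hcon j))
    omega
  rw [← Finset.mul_sum, sum_monomial_eq_zero d hi, mul_zero]

/-- Existence of a dual polynomial: degree ≤ r, equal to 1 at u0 and 0 at other points of W. -/
lemma exists_dual_poly {m r : ℕ} (W : Set (Fin m → ZMod 2))
    (hW : LinearIndependent (ZMod 2) (fun x : W => evalVec m r x.1))
    {u0 : Fin m → ZMod 2} (hu0 : u0 ∈ W) :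
    ∃ f : MvPolynomial (Fin m) (ZMod 2), f.totalDegree ≤ r ∧
      eval u0 f = 1 ∧ ∀ u ∈ W, u ≠ u0 → eval u f = 0 := by
  classical
  set E := ({S : Finset (Fin m) // S.card ≤ r} → ZMod 2)
  set x0 : W := ⟨u0, hu0⟩
  set s : Set W := {y | y ≠ x0}
  have hnm : evalVec m r u0 ∉
      Submodule.span (ZMod 2) ((fun x : W => evalVec m r x.1) '' s) := by
    have := hW.notMem_span_image (s := s) (x := x0) (by simp [s])
    exact this
  obtain ⟨φ, hφ0, hφker⟩ := Submodule.exists_dual_map_eq_bot_of_notMem hnm inferInstance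
  have hφ1 : φ (evalVec m r u0) = 1 := by
    have : ∀ a : ZMod 2, a ≠ 0 → a = 1 := by decide
    exact this _ hφ0
  have hφz : ∀ u ∈ W, u ≠ u0 → φ (evalVec m r u) = 0 := by
    intro u hu hne
    have hmem : evalVec m r u ∈ Submodule.span (ZMod 2)
        ((fun x : W => evalVec m r x.1) '' s) := by
      apply Submodule.subset_span
      exact ⟨⟨u, hu⟩, by simp [s, x0, Subtype.ext_iff, hne], rfl⟩
    have := Submodule.mem_map_of_mem (f := φ) hmem
    rw [hφker] at this
    exact (Submodule.mem_bot (ZMod 2)).mp this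
  refine ⟨∑ S : {S : Finset (Fin m) // S.card ≤ r},
      C (φ (Pi.single S 1)) * ∏ i ∈ S.1, X i, ?_, ?_, ?_⟩
  · apply le_trans (totalDegree_finset_sum _ _)
    apply Finset.sup_le
    intro S _
    calc (C (φ (Pi.single S 1)) * ∏ i ∈ S.1, X i).totalDegree
        ≤ (C (φ (Pi.single S 1))).totalDegree + (∏ i ∈ S.1, X i).totalDegree :=
          totalDegree_mul _ _
      _ ≤ 0 + ∑ i ∈ S.1, (X i : MvPolynomial (Fin m) (ZMod 2)).totalDegree := by
          gcongr
          · exact le_of_eq (totalDegree_C _)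
          · exact totalDegree_finset_prod _ _
      _ = S.1.card := by simp [totalDegree_X]
      _ ≤ r := S.2
  · have key : ∀ u : Fin m → ZMod 2,
        eval u (∑ S : {S : Finset (Fin m) // S.card ≤ r},
          C (φ (Pi.single S 1)) * ∏ i ∈ S.1, X i) = φ (evalVec m r u) := by
      intro u
      rw [map_sum]
      have : ∀ S : {S : Finset (Fin m) // S.card ≤ r},
          eval u (C (φ (Pi.single S 1)) * ∏ i ∈ S.1, X i)
            = φ (evalVec m r u S • Pi.single S 1) := by
        intro S
        rw [map_smul, smul_eq_mul]
        simp [evalVec, mul_comm]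
      simp_rw [this, ← map_sum]
      congr 1
      have : ∀ S : {S : Finset (Fin m) // S.card ≤ r},
          evalVec m r u S • (Pi.single S 1 : E) = (Pi.single S (evalVec m r u S) : E) := by
        intro S
        funext T
        by_cases hT : T = S <;> simp [Pi.single_apply, hT]
      simp_rw [this]
      exact Finset.univ_sum_single _
    rw [key, hφ1]
  · intro u hu hne
    have key : eval u (∑ S : {S : Finset (Fin m) // S.card ≤ r},
          C (φ (Pi.single S 1)) * ∏ i ∈ S.1, X i) = φ (evalVec m r u) := by
      rw [map_sum]
      have : ∀ S : {S : Finset (Fin m) // S.card ≤ r},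
          eval u (C (φ (Pi.single S 1)) * ∏ i ∈ S.1, X i)
            = φ (evalVec m r u S • Pi.single S 1) := by
        intro S
        rw [map_smul, smul_eq_mul]
        simp [evalVec, mul_comm]
      simp_rw [this, ← map_sum]
      congr 1
      have : ∀ S : {S : Finset (Fin m) // S.card ≤ r},
          evalVec m r u S • (Pi.single S 1 : E) = (Pi.single S (evalVec m r u S) : E) := by
        intro S
        funext T
        by_cases hT : T = S <;> simp [Pi.single_apply, hT]
      simp_rw [this]
      exact Finset.univ_sum_single _
    rw [key]
    exact hφz u hu hne

/-- The key combinatorial step: the pairing property forces `U ⊆ V`. -/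
lemma subset_of_pair {m r : ℕ} (U V : Set (Fin m → ZMod 2))
    (hU : LinearIndependent (ZMod 2) (fun x : U => evalVec m r x.1))
    (hV : LinearIndependent (ZMod 2) (fun x : V => evalVec m r x.1))
    (pair : ∀ g : MvPolynomial (Fin m) (ZMod 2), g.totalDegree ≤ 2 * r + 1 →
      ∑ v : Fin m → ZMod 2, chi U v * eval v g = ∑ v : Fin m → ZMod 2, chi V v * eval v g) :
    U ⊆ V := by
  classical
  intro u0 hu0
  by_contra hu0V
  obtain ⟨f, hfd, hf1, hf0⟩ := exists_dual_poly U hU hu0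
  -- ∑ over U of f is 1
  have hsumU : ∑ v : Fin m → ZMod 2, chi U v * eval v f = 1 := by
    rw [Finset.sum_eq_single u0]
    · rw [chi_eq_one hu0, hf1, mul_one]
    · intro v _ hne
      by_cases hv : v ∈ U
      · rw [hf0 v hv hne, mul_zero]
      · rw [chi_eq_zero hv, zero_mul]
    · intro h; exact absurd (Finset.mem_univ u0) h
  have hsumV : ∑ v : Fin m → ZMod 2, chi V v * eval v f = 1 := by
    rw [← pair f (by omega), hsumU]
  -- find v* ∈ V with f(v*) = 1
  obtain ⟨vs, hvsV, hvsf⟩ : ∃ vs, vs ∈ V ∧ eval vs f = 1 := by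
    by_contra hcon
    push_neg at hcon
    have : ∑ v : Fin m → ZMod 2, chi V v * eval v f = 0 := by
      apply Finset.sum_eq_zero
      intro v _
      by_cases hv : v ∈ V
      · have : eval v f = 0 := by
          have h01 : ∀ a : ZMod 2, a ≠ 1 → a = 0 := by decide
          exact h01 _ (hcon v hv)
        rw [this, mul_zero]
      · rw [chi_eq_zero hv, zero_mul]
    rw [this] at hsumV
    exact absurd hsumV (by decide)
  have hvs_ne : vs ≠ u0 := fun h => hu0V (h ▸ hvsV)
  obtain ⟨j, hj⟩ : ∃ j, u0 j ≠ vs j := Function.ne_iff.mp (fun h => hvs_ne h.symm)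
  obtain ⟨h, hhd, hh1, hh0⟩ := exists_dual_poly V hV hvsV
  set g : MvPolynomial (Fin m) (ZMod 2) := f * (h * (X j + C (vs j) + 1)) with hg
  have hgd : g.totalDegree ≤ 2 * r + 1 := by
    have h1 : (X j + C (vs j) + (1 : MvPolynomial (Fin m) (ZMod 2))).totalDegree ≤ 1 := by
      apply le_trans (totalDegree_add _ _)
      simp only [max_le_iff]
      constructor
      · apply le_trans (totalDegree_add _ _)
        simp [totalDegree_X, totalDegree_C]
      · simp [totalDegree_one]
    calc g.totalDegree ≤ f.totalDegree + (h * (X j + C (vs j) + 1)).totalDegree :=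
          totalDegree_mul _ _
      _ ≤ f.totalDegree + (h.totalDegree + (X j + C (vs j) + 1).totalDegree) := by
          gcongr; exact totalDegree_mul _ _
      _ ≤ r + (r + 1) := by gcongr
      _ = 2 * r + 1 := by ring
  -- LHS is 0
  have hL : ∑ v : Fin m → ZMod 2, chi U v * eval v g = 0 := by
    apply Finset.sum_eq_zero
    intro v _
    by_cases hv : v ∈ U
    · by_cases hve : v = u0
      · subst hve
        have : eval v g = 0 := by
          rw [hg]
          simp only [map_mul, map_add, eval_X, eval_C, map_one]
          have hz : ∀ a b : ZMod 2, a ≠ b → a + b + 1 = 0 := by decide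
          rw [hz _ _ hj, mul_zero, mul_zero]
        rw [this, mul_zero]
      · have : eval v g = 0 := by rw [hg, map_mul, hf0 v hv hve, zero_mul]
        rw [this, mul_zero]
    · rw [chi_eq_zero hv, zero_mul]
  -- RHS is 1
  have hR : ∑ v : Fin m → ZMod 2, chi V v * eval v g = 1 := by
    rw [Finset.sum_eq_single vs]
    · rw [chi_eq_one hvsV, hg]
      simp only [map_mul, map_add, eval_X, eval_C, map_one, hvsf, hh1]
      have hz : ∀ a : ZMod 2, a + a + 1 = 1 := by decide
      rw [hz]
      ring
    · intro v _ hne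
      by_cases hv : v ∈ V
      · rw [hg]
        simp only [map_mul]
        rw [hh0 v hv hne, zero_mul, mul_zero, mul_zero]
      · rw [chi_eq_zero hv, zero_mul]
    · intro hcon; exact absurd (Finset.mem_univ vs) hcon
  rw [pair g hgd, hR] at hL
  exact absurd hL (by decide)

theorem stmt7 (m r : ℕ) (hrm : 2 * r + 2 ≤ m)
    (c c' : (Fin m → ZMod 2) → ZMod 2)
    (hc : c ∈ RM m (m - (2 * r + 2))) (hc' : c' ∈ RM m (m - (2 * r + 2)))
    (U V : Set (Fin m → ZMod 2))
    (hU : LinearIndependent (ZMod 2) (fun x : U => evalVec m r x.1))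
    (hV : LinearIndependent (ZMod 2) (fun x : V => evalVec m r x.1))
    (heq : c + chi U = c' + chi V) :
    c = c' ∧ U = V := by
  classical
  obtain ⟨p, -, hpd, hpe⟩ := hc
  obtain ⟨p', -, hpd', hpe'⟩ := hc'
  set q : MvPolynomial (Fin m) (ZMod 2) := p' - p with hq
  have hqd : q.totalDegree ≤ m - (2 * r + 2) := by
    rw [hq, sub_eq_add_neg]
    apply le_trans (totalDegree_add _ _)
    rw [totalDegree_neg]
    exact max_le hpd' hpd
  have hqe : ∀ v, eval v q = chi U v - chi V v := by
    intro v
    have h := congrFun heq v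
    simp only [Pi.add_apply] at h
    have hkey : ∀ a b cc dd : ZMod 2, a + b = cc + dd → dd - b = a - cc := by decide
    have := hkey _ _ _ _ h
    rw [hq, map_sub, ← hpe v, ← hpe' v]
    have hkey2 : ∀ a b cc dd : ZMod 2, a + b = cc + dd → cc - a = b - dd := by decide
    exact hkey2 _ _ _ _ h
  have pair : ∀ g : MvPolynomial (Fin m) (ZMod 2), g.totalDegree ≤ 2 * r + 1 →
      ∑ v : Fin m → ZMod 2, chi U v * eval v g = ∑ v : Fin m → ZMod 2, chi V v * eval v g := by
    intro g hgd
    have hsum : ∑ v : Fin m → ZMod 2, (chi U v - chi V v) * eval v g = 0 := by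
      have : ∀ v : Fin m → ZMod 2, (chi U v - chi V v) * eval v g = eval v (q * g) := by
        intro v; rw [map_mul, hqe v]
      simp_rw [this]
      apply sum_eval_eq_zero'
      calc (q * g).totalDegree ≤ q.totalDegree + g.totalDegree := totalDegree_mul _ _
        _ ≤ (m - (2 * r + 2)) + (2 * r + 1) := by gcongr
        _ < m := by omega
    have : (∑ v : Fin m → ZMod 2, chi U v * eval v g)
        - ∑ v : Fin m → ZMod 2, chi V v * eval v g = 0 := by
      rw [← Finset.sum_sub_distrib]
      rw [← hsum]
      apply Finset.sum_congr rfl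
      intro v _
      ring
    exact sub_eq_zero.mp this
  have pair' : ∀ g : MvPolynomial (Fin m) (ZMod 2), g.totalDegree ≤ 2 * r + 1 →
      ∑ v : Fin m → ZMod 2, chi V v * eval v g = ∑ v : Fin m → ZMod 2, chi U v * eval v g :=
    fun g hg => (pair g hg).symm
  have hUV : U = V :=
    Set.Subset.antisymm (subset_of_pair U V hU hV pair) (subset_of_pair V U hV hU pair')
  refine ⟨?_, hUV⟩
  subst hUV
  funext v
  have h := congrFun heq v
  simp only [Pi.add_apply] at h
  exact add_right_cancel h
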